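/- Let u^1,...,u^k be C^2 solutions of ∂_t u^i = ∇·( m |𝐮|^{m-1} ∇u^i ) on an open set where w̄ = |𝐮| = (∑_i (u^i)^2)^{1/2} > 0. Then w̄ satisfies ∂_t w̄ = ∇·( m w̄^{m-1} ∇w̄ ) + m w̄^{m-2} ( |∇w̄|^2 − ∑_{i=1}^k |∇u^i|^2 ), and in particular ∂_t w̄ ≤ Δ( w̄^m ), i.e. the norm of a solution of the system is a subsolution of the scalar porous medium equation. -/

import Mathlib

open Finset

theorem aux_spatial {n k : ℕ} (m : ℝ) (hm : 1 < m)
    (g : Fin k → EuclideanSpace ℝ (Fin n) → ℝ)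
    (hg : ∀ i, ContDiff ℝ 2 (g i))
    (w : EuclideanSpace ℝ (Fin n) → ℝ)
    (hw : ∀ y, w y = Real.sqrt (∑ i, g i y ^ 2))
    (hwpos : ∀ y, 0 < w y)
    (x : EuclideanSpace ℝ (Fin n)) (c : ℝ)
    (hc : c * w x = ∑ i, g i x *
      (∑ j : Fin n, fderiv ℝ (fun y => m * w y ^ (m - 1)
          * fderiv ℝ (g i) y (EuclideanSpace.single j 1)) x (EuclideanSpace.single j 1))) :
    c = (∑ j : Fin n, fderiv ℝ (fun y => m * w y ^ (m - 1)
            * fderiv ℝ w y (EuclideanSpace.single j 1)) x (EuclideanSpace.single j 1))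
        + m * w x ^ (m - 2) *
          ((∑ j : Fin n, (fderiv ℝ w x (EuclideanSpace.single j 1)) ^ 2)
            - ∑ i, ∑ j : Fin n, (fderiv ℝ (g i) x (EuclideanSpace.single j 1)) ^ 2)
    ∧ c ≤ ∑ j : Fin n, fderiv ℝ (fun y => fderiv ℝ (fun z => w z ^ m) y
            (EuclideanSpace.single j 1)) x (EuclideanSpace.single j 1) := by
  have h12 : ((2:WithTop ℕ∞) ≠ 0) := by norm_num
  have hgd : ∀ i, Differentiable ℝ (g i) := fun i => (hg i).differentiable h12
  have hSpos : ∀ y, 0 < ∑ i, g i y ^ 2 := fun y => Real.sqrt_pos.mp (hw y ▸ hwpos y)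
  have hwC : ContDiff ℝ 2 w := by
    have hw' : w = fun y => Real.sqrt (∑ i, g i y ^ 2) := funext hw
    rw [hw', contDiff_iff_contDiffAt]
    intro y
    exact (Real.contDiffAt_sqrt (hSpos y).ne').comp y
      (ContDiff.sum fun i _ => (hg i).pow 2).contDiffAt
  have hwd : Differentiable ℝ w := hwC.differentiable h12
  -- differentiability of directional derivatives
  have hder : ∀ (f : EuclideanSpace ℝ (Fin n) → ℝ), ContDiff ℝ 2 f →
      ∀ v, Differentiable ℝ (fun y => fderiv ℝ f y v) := by
    intro f hf v
    exact (((ContinuousLinearMap.apply ℝ ℝ v).contDiff).comp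
      (hf.fderiv_right (m := 1) (by norm_num))).differentiable (by norm_num)
  -- evaluated product rule
  have hmul : ∀ (f h : EuclideanSpace ℝ (Fin n) → ℝ) (y v : EuclideanSpace ℝ (Fin n)),
      DifferentiableAt ℝ f y → DifferentiableAt ℝ h y →
      fderiv ℝ (fun z => f z * h z) y v
        = fderiv ℝ f y v * h y + f y * fderiv ℝ h y v := by
    intro f h y v hf hh
    rw [fderiv_fun_mul hf hh]
    simp only [ContinuousLinearMap.add_apply, ContinuousLinearMap.smul_apply, smul_eq_mul]
    ring
  -- evaluated rpow chain rule
  have hrpow : ∀ (p : ℝ) (y v : EuclideanSpace ℝ (Fin n)),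
      fderiv ℝ (fun z => w z ^ p) y v = p * w y ^ (p - 1) * fderiv ℝ w y v := by
    intro p y v
    rw [(((hwd y).hasFDerivAt.rpow_const (Or.inl (hwpos y).ne')).fderiv)]
    simp only [ContinuousLinearMap.smul_apply, smul_eq_mul]
  -- key identity  w * ∂w = ∑ g * ∂g
  have hkey : ∀ (y v : EuclideanSpace ℝ (Fin n)),
      w y * fderiv ℝ w y v = ∑ i, g i y * fderiv ℝ (g i) y v := by
    intro y v
    have hfun : (fun z => w z * w z) = fun z => ∑ i, g i z * g i z := by
      funext z
      rw [hw z, Real.mul_self_sqrt (hSpos z).le]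
      exact Finset.sum_congr rfl fun i _ => pow_two (g i z)
    have h1 : fderiv ℝ (fun z => w z * w z) y v = fderiv ℝ w y v * w y + w y * fderiv ℝ w y v :=
      hmul w w y v (hwd y) (hwd y)
    have h2 : fderiv ℝ (fun z => ∑ i, g i z * g i z) y v
        = ∑ i, (fderiv ℝ (g i) y v * g i y + g i y * fderiv ℝ (g i) y v) := by
      rw [fderiv_fun_sum (A := fun i z => g i z * g i z) (fun i _ => ((hgd i y)).mul (hgd i y)), ContinuousLinearMap.sum_apply]
      exact Finset.sum_congr rfl fun i _ => hmul (g i) (g i) y v (hgd i y) (hgd i y)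
    rw [hfun] at h1
    rw [h2] at h1
    have h3 : ∑ i, (fderiv ℝ (g i) y v * g i y + g i y * fderiv ℝ (g i) y v)
        = 2 * ∑ i, g i y * fderiv ℝ (g i) y v := by
      rw [Finset.mul_sum]
      exact Finset.sum_congr rfl fun i _ => by ring
    rw [h3] at h1
    linarith
  -- second-order version of the key identity
  have hstar : ∀ v : EuclideanSpace ℝ (Fin n),
      fderiv ℝ w x v * fderiv ℝ w x v + w x * fderiv ℝ (fun y => fderiv ℝ w y v) x v
      = ∑ i, (fderiv ℝ (g i) x v * fderiv ℝ (g i) x v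
          + g i x * fderiv ℝ (fun y => fderiv ℝ (g i) y v) x v) := by
    intro v
    have hfun : (fun y => w y * fderiv ℝ w y v) = fun y => ∑ i, g i y * fderiv ℝ (g i) y v :=
      funext fun y => hkey y v
    have h1 : fderiv ℝ (fun y => w y * fderiv ℝ w y v) x v
        = fderiv ℝ w x v * fderiv ℝ w x v + w x * fderiv ℝ (fun y => fderiv ℝ w y v) x v :=
      hmul w (fun y => fderiv ℝ w y v) x v (hwd x) (hder w hwC v x)
    have h2 : fderiv ℝ (fun y => ∑ i, g i y * fderiv ℝ (g i) y v) x v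
        = ∑ i, (fderiv ℝ (g i) x v * fderiv ℝ (g i) x v
            + g i x * fderiv ℝ (fun y => fderiv ℝ (g i) y v) x v) := by
      rw [fderiv_fun_sum (A := fun i y => g i y * fderiv ℝ (g i) y v) (fun i _ => (hgd i x).mul (hder (g i) (hg i) v x)),
        ContinuousLinearMap.sum_apply]
      exact Finset.sum_congr rfl fun i _ => hmul (g i) _ x v (hgd i x) (hder (g i) (hg i) v x)
    rw [← h1, hfun, h2]
  -- expansion of the flux term
  have hTgen : ∀ (f : EuclideanSpace ℝ (Fin n) → ℝ), Differentiable ℝ f → ContDiff ℝ 2 f →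
      ∀ v : EuclideanSpace ℝ (Fin n),
      fderiv ℝ (fun y => m * w y ^ (m - 1) * fderiv ℝ f y v) x v
        = m * ((m - 1) * w x ^ (m - 2) * fderiv ℝ f x v * fderiv ℝ w x v
            + w x ^ (m - 1) * fderiv ℝ (fun y => fderiv ℝ f y v) x v) := by
    intro f hfd hfC v
    have hq : ∀ y, DifferentiableAt ℝ (fun z => m * w z ^ (m - 1)) y := fun y =>
      ((((hwd y).hasFDerivAt.rpow_const (Or.inl (hwpos y).ne')).differentiableAt).const_mul m)
    have h1 : fderiv ℝ (fun y => m * w y ^ (m - 1) * fderiv ℝ f y v) x v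
        = fderiv ℝ (fun z => m * w z ^ (m - 1)) x v * fderiv ℝ f x v
          + (m * w x ^ (m - 1)) * fderiv ℝ (fun y => fderiv ℝ f y v) x v :=
      hmul (fun z => m * w z ^ (m - 1)) (fun y => fderiv ℝ f y v) x v (hq x) (hder f hfC v x)
    have h2 : fderiv ℝ (fun z => m * w z ^ (m - 1)) x v
        = m * ((m - 1) * w x ^ (m - 2) * fderiv ℝ w x v) := by
      rw [fderiv_const_mul (((hwd x).hasFDerivAt.rpow_const
        (Or.inl (hwpos x).ne')).differentiableAt) m]
      simp only [ContinuousLinearMap.smul_apply, smul_eq_mul]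
      rw [hrpow (m - 1) x v]
      have : m - 1 - 1 = m - 2 := by ring
      rw [this]
    rw [h1, h2]
    ring
  -- Cauchy-Schwarz
  have hCS : ∀ v : EuclideanSpace ℝ (Fin n),
      fderiv ℝ w x v ^ 2 ≤ ∑ i, fderiv ℝ (g i) x v ^ 2 := by
    intro v
    have h := Finset.sum_mul_sq_le_sq_mul_sq Finset.univ (fun i => g i x)
      (fun i => fderiv ℝ (g i) x v)
    have hs : ∑ i, g i x ^ 2 = w x ^ 2 := by rw [hw x, Real.sq_sqrt (hSpos x).le]
    rw [← hkey x v] at h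
    rw [hs] at h
    have hw2 : 0 < w x ^ 2 := pow_pos (hwpos x) 2
    have h' : w x ^ 2 * fderiv ℝ w x v ^ 2 ≤ w x ^ 2 * ∑ i, fderiv ℝ (g i) x v ^ 2 := by
      calc w x ^ 2 * fderiv ℝ w x v ^ 2 = (w x * fderiv ℝ w x v) ^ 2 := by ring
        _ ≤ _ := h
    exact le_of_mul_le_mul_left h' hw2
  -- per-direction identity
  have hj : ∀ v : EuclideanSpace ℝ (Fin n),
      ∑ i, g i x * fderiv ℝ (fun y => m * w y ^ (m - 1) * fderiv ℝ (g i) y v) x v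
      = w x * (fderiv ℝ (fun y => m * w y ^ (m - 1) * fderiv ℝ w y v) x v
          + m * w x ^ (m - 2) * (fderiv ℝ w x v ^ 2 - ∑ i, fderiv ℝ (g i) x v ^ 2)) := by
    intro v
    have e1 : ∀ i, g i x * fderiv ℝ (fun y => m * w y ^ (m - 1) * fderiv ℝ (g i) y v) x v
        = (m * (m - 1) * w x ^ (m - 2) * fderiv ℝ w x v) * (g i x * fderiv ℝ (g i) x v)
          + (m * w x ^ (m - 1)) * (g i x * fderiv ℝ (fun y => fderiv ℝ (g i) y v) x v) := by
      intro i
      rw [hTgen (g i) (hgd i) (hg i) v]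
      ring
    rw [Finset.sum_congr rfl fun i _ => e1 i, Finset.sum_add_distrib,
      ← Finset.mul_sum, ← Finset.mul_sum, ← hkey x v]
    have h1 : ∑ i, g i x * fderiv ℝ (fun y => fderiv ℝ (g i) y v) x v
        = fderiv ℝ w x v * fderiv ℝ w x v
          + w x * fderiv ℝ (fun y => fderiv ℝ w y v) x v
          - ∑ i, fderiv ℝ (g i) x v * fderiv ℝ (g i) x v := by
      have h2 := hstar v
      rw [Finset.sum_add_distrib] at h2
      linarith
    rw [h1, hTgen w hwd hwC v]
    have hpw : w x ^ (m - 1) = w x ^ (m - 2) * w x := by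
      rw [show m - 1 = m - 2 + 1 by ring, Real.rpow_add_one (hwpos x).ne' (m - 2)]
    have hsq : ∀ r : ℝ, r ^ 2 = r * r := fun r => pow_two r
    rw [Finset.sum_congr rfl fun i (_ : i ∈ Finset.univ) => hsq (fderiv ℝ (g i) x v), hsq, hpw]
    ring
  -- main equality
  have heq1 : c = (∑ j : Fin n, fderiv ℝ (fun y => m * w y ^ (m - 1)
            * fderiv ℝ w y (EuclideanSpace.single j 1)) x (EuclideanSpace.single j 1))
        + m * w x ^ (m - 2) *
          ((∑ j : Fin n, (fderiv ℝ w x (EuclideanSpace.single j 1)) ^ 2)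
            - ∑ i, ∑ j : Fin n, (fderiv ℝ (g i) x (EuclideanSpace.single j 1)) ^ 2) := by
    apply mul_right_cancel₀ (hwpos x).ne'
    rw [hc]
    simp only [Finset.mul_sum]
    rw [Finset.sum_comm]
    rw [Finset.sum_congr rfl fun j (_ : j ∈ Finset.univ) => hj (EuclideanSpace.single j 1)]
    rw [← Finset.mul_sum, mul_comm (w x)]
    congr 1
    rw [Finset.sum_add_distrib]
    congr 1
    rw [← Finset.mul_sum]
    congr 1
    rw [Finset.sum_sub_distrib]
    congr 1
    exact Finset.sum_comm
  refine ⟨heq1, ?_⟩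
  have hwm : ∀ j : Fin n, fderiv ℝ (fun y => fderiv ℝ (fun z => w z ^ m) y
        (EuclideanSpace.single j 1)) x (EuclideanSpace.single j 1)
      = fderiv ℝ (fun y => m * w y ^ (m - 1) * fderiv ℝ w y (EuclideanSpace.single j 1)) x
          (EuclideanSpace.single j 1) := by
    intro j
    have hfn : (fun y => fderiv ℝ (fun z => w z ^ m) y (EuclideanSpace.single j 1))
        = fun y => m * w y ^ (m - 1) * fderiv ℝ w y (EuclideanSpace.single j 1) :=
      funext fun y => hrpow m y _
    rw [hfn]
  rw [Finset.sum_congr rfl fun j (_ : j ∈ Finset.univ) => hwm j, heq1]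
  have h1 : (0:ℝ) ≤ m * w x ^ (m - 2) :=
    mul_nonneg (by linarith) (Real.rpow_pos_of_pos (hwpos x) _).le
  have h2 : (∑ j : Fin n, (fderiv ℝ w x (EuclideanSpace.single j 1)) ^ 2)
      ≤ ∑ i, ∑ j : Fin n, (fderiv ℝ (g i) x (EuclideanSpace.single j 1)) ^ 2 := by
    rw [Finset.sum_comm]
    exact Finset.sum_le_sum fun j _ => hCS (EuclideanSpace.single j 1)
  nlinarith [mul_nonpos_of_nonneg_of_nonpos h1 (sub_nonpos.mpr h2)]



/-- If `u^1,...,u^k` are `C²` solutions of `∂_t u^i = ∇·(m|𝐮|^{m-1}∇u^i)` with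
`w̄ = |𝐮| > 0`, then `w̄` satisfies
`∂_t w̄ = ∇·(m w̄^{m-1} ∇w̄) + m w̄^{m-2}(|∇w̄|² − ∑_i |∇u^i|²)` and in particular
`∂_t w̄ ≤ Δ(w̄^m)`. -/
theorem stmt7 (n k : ℕ) (hn : 0 < n) (hk : 0 < k) (m : ℝ) (hm : 1 < m)
    (u : Fin k → EuclideanSpace ℝ (Fin n) → ℝ → ℝ)
    (hsmooth : ∀ i, ContDiff ℝ 2 (fun p : EuclideanSpace ℝ (Fin n) × ℝ => u i p.1 p.2))
    (wb : EuclideanSpace ℝ (Fin n) → ℝ → ℝ)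
    (hwb : ∀ x t, wb x t = Real.sqrt (∑ i, (u i x t) ^ 2))
    (hpos : ∀ x t, 0 < wb x t)
    (heq : ∀ i x t, deriv (fun s => u i x s) t
      = ∑ j : Fin n,
          fderiv ℝ (fun y =>
            m * (wb y t) ^ (m - 1)
              * fderiv ℝ (fun z => u i z t) y (EuclideanSpace.single j 1))
            x (EuclideanSpace.single j 1)) :
    ∀ x t,
      deriv (fun s => wb x s) t
        = (∑ j : Fin n,
            fderiv ℝ (fun y =>
              m * (wb y t) ^ (m - 1)
                * fderiv ℝ (fun z => wb z t) y (EuclideanSpace.single j 1))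
              x (EuclideanSpace.single j 1))
          + m * (wb x t) ^ (m - 2)
              * ((∑ j : Fin n, (fderiv ℝ (fun z => wb z t) x (EuclideanSpace.single j 1)) ^ 2)
                - ∑ i, ∑ j : Fin n,
                    (fderiv ℝ (fun z => u i z t) x (EuclideanSpace.single j 1)) ^ 2)
      ∧ deriv (fun s => wb x s) t
          ≤ ∑ j : Fin n,
              fderiv ℝ (fun y =>
                fderiv ℝ (fun z => (wb z t) ^ m) y (EuclideanSpace.single j 1))
                x (EuclideanSpace.single j 1) := by
  intro x t
  have hgC : ∀ i, ContDiff ℝ 2 (fun y => u i y t) := fun i =>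
    (hsmooth i).comp (contDiff_id.prodMk contDiff_const)
  have hut : ∀ i, HasDerivAt (fun s => u i x s) (deriv (fun s => u i x s) t) t := by
    intro i
    have hdi : Differentiable ℝ (fun s => u i x s) :=
      ((hsmooth i).differentiable (by norm_num)).comp
        ((differentiable_const x).prodMk differentiable_id)
    exact (hdi t).hasDerivAt
  have hSpos : 0 < ∑ i, u i x t ^ 2 := Real.sqrt_pos.mp (hwb x t ▸ hpos x t)
  have hderiv : HasDerivAt (fun s => wb x s)
      ((∑ i, ((2:ℕ):ℝ) * u i x t ^ (2-1) * deriv (fun s => u i x s) t)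
        / (2 * Real.sqrt (∑ i, u i x t ^ 2))) t := by
    have hfun : (fun s => wb x s) = fun s => Real.sqrt (∑ i, u i x s ^ 2) :=
      funext fun s => hwb x s
    rw [hfun]
    exact (HasDerivAt.fun_sum fun i _ => (hut i).pow 2).sqrt hSpos.ne'
  have hc : deriv (fun s => wb x s) t * wb x t
      = ∑ i, u i x t * deriv (fun s => u i x s) t := by
    rw [hderiv.deriv, hwb x t]
    have hs : Real.sqrt (∑ i, u i x t ^ 2) ≠ 0 := ne_of_gt (Real.sqrt_pos.mpr hSpos)
    rw [div_mul_eq_mul_div, mul_comm (2:ℝ), mul_div_assoc]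
    rw [show Real.sqrt (∑ i, u i x t ^ 2) / (Real.sqrt (∑ i, u i x t ^ 2) * 2) = 1/2 by
      rw [div_mul_eq_div_div, div_self hs]]
    rw [mul_one_div, Finset.sum_div]
    refine Finset.sum_congr rfl fun i _ => ?_
    push_cast
    ring
  have hc' : deriv (fun s => wb x s) t * wb x t
      = ∑ i, u i x t * (∑ j : Fin n, fderiv ℝ (fun y => m * (wb y t) ^ (m - 1)
          * fderiv ℝ (fun z => u i z t) y (EuclideanSpace.single j 1)) x
          (EuclideanSpace.single j 1)) := by
    rw [hc]
    exact Finset.sum_congr rfl fun i _ => by rw [heq i x t]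
  exact aux_spatial m hm (fun i y => u i y t) hgC (fun y => wb y t)
    (fun y => hwb y t) (fun y => hpos y t) x _ hc'
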